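/- Let B ∈ R^{n×r} be full column rank with polar decomposition B = UH, and let S ∈ R^{s×n} with SU full column rank. Writing b = UUᵀb + b₂ with b₂ = (I − UUᵀ)b, the least-squares solution ĉ of min_x ‖S(Bx − b)‖₂ satisfies Bĉ = UUᵀb + U(SU)^† S b₂. -/

import Mathlib

open Matrix
open scoped Matrix.Norms.L2Operator

/-- Euclidean norm of a vector in `Fin n → ℝ`. -/
noncomputable def enorm₂ {n : ℕ} (v : Fin n → ℝ) : ℝ :=
  ‖(WithLp.equiv 2 (Fin n → ℝ)).symm v‖

/-- Smallest singular value: infimum of `‖M x‖₂` over unit vectors `x`. -/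
noncomputable def sigmaMin {m r : ℕ} (M : Matrix (Fin m) (Fin r) ℝ) : ℝ :=
  sInf {t | ∃ x : Fin r → ℝ, enorm₂ x = 1 ∧ t = enorm₂ (M.mulVec x)}

/-- Largest singular value: supremum of `‖M x‖₂` over unit vectors `x`. -/
noncomputable def sigmaMax {m r : ℕ} (M : Matrix (Fin m) (Fin r) ℝ) : ℝ :=
  sSup {t | ∃ x : Fin r → ℝ, enorm₂ x = 1 ∧ t = enorm₂ (M.mulVec x)}

/-- Moore–Penrose pseudoinverse of a full-column-rank matrix. -/
noncomputable def pinv {m r : ℕ} (M : Matrix (Fin m) (Fin r) ℝ) :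
    Matrix (Fin r) (Fin m) ℝ :=
  (Mᵀ * M)⁻¹ * Mᵀ

/-- `S` is a row-subsampling matrix: a row-submatrix of the identity. -/
def IsSubsampling {s n : ℕ} (S : Matrix (Fin s) (Fin n) ℝ) : Prop :=
  ∃ f : Fin s → Fin n, Function.Injective f ∧ ∀ i j, S i j = if j = f i then 1 else 0

/-- A square real matrix of full rank is a unit. -/
lemma isUnit_of_rank_eq {r : ℕ} (A : Matrix (Fin r) (Fin r) ℝ) (h : A.rank = r) :
    IsUnit A := by
  rw [← Matrix.mulVec_surjective_iff_isUnit]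
  have htop : LinearMap.range A.mulVecLin = ⊤ := by
    apply Submodule.eq_top_of_finrank_eq
    simpa [Matrix.rank] using h
  intro y
  have : y ∈ LinearMap.range A.mulVecLin := htop ▸ Submodule.mem_top
  obtain ⟨x, hx⟩ := this
  exact ⟨x, hx⟩

/-- formula for the subsampled least-squares approximation. -/
theorem stmt6 {n r s : ℕ} (hrs : r ≤ s) (hsn : s ≤ n)
    (B U : Matrix (Fin n) (Fin r) ℝ) (H : Matrix (Fin r) (Fin r) ℝ)
    (hB : B = U * H) (hU : Uᵀ * U = 1) (hH : H.PosDef)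
    (hBrank : B.rank = r)
    (S : Matrix (Fin s) (Fin n) ℝ) (hSU : (S * U).rank = r)
    (b : Fin n → ℝ) (chat : Fin r → ℝ)
    (hchat : chat = (pinv (S * B)).mulVec (S.mulVec b)) :
    B.mulVec chat =
      U.mulVec (Uᵀ.mulVec b) +
        (U * pinv (S * U) * S).mulVec (b - U.mulVec (Uᵀ.mulVec b)) := by
  set M := S * U with hM
  -- MᵀM is invertible
  have hMM : IsUnit (Mᵀ * M) := by
    apply isUnit_of_rank_eq
    rw [Matrix.rank_transpose_mul_self]
    exact hSU
  have hMMdet : IsUnit (Mᵀ * M).det := (Matrix.isUnit_iff_isUnit_det _).mp hMM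
  -- H is invertible and symmetric
  have hHdet : IsUnit H.det := (Matrix.isUnit_iff_isUnit_det _).mp hH.isUnit
  have hHT : Hᵀ = H := by
    have := hH.isHermitian.eq
    rwa [Matrix.conjTranspose_eq_transpose_of_trivial] at this
  -- pinv (S*B) = H⁻¹ * pinv M
  have hSB : S * B = M * H := by rw [hB, hM, Matrix.mul_assoc]
  have hpinv : pinv (S * B) = H⁻¹ * pinv M := by
    rw [hSB]
    unfold pinv
    rw [Matrix.transpose_mul, hHT]
    rw [show H * Mᵀ * (M * H) = H * (Mᵀ * M) * H by
      simp only [Matrix.mul_assoc]]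
    rw [Matrix.mul_inv_rev, Matrix.mul_inv_rev]
    calc H⁻¹ * ((Mᵀ * M)⁻¹ * H⁻¹) * (H * Mᵀ)
        = H⁻¹ * (Mᵀ * M)⁻¹ * (H⁻¹ * H) * Mᵀ := by
          simp only [Matrix.mul_assoc]
      _ = H⁻¹ * ((Mᵀ * M)⁻¹ * Mᵀ) := by
          rw [Matrix.nonsing_inv_mul _ hHdet]
          simp only [Matrix.mul_assoc, Matrix.one_mul]
      _ = H⁻¹ * ((Mᵀ * M)⁻¹ * Mᵀ) := rfl
  -- B * pinv (S*B) = U * pinv M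
  have hBp : B * pinv (S * B) = U * pinv M := by
    rw [hpinv, hB, Matrix.mul_assoc, ← Matrix.mul_assoc H,
      Matrix.mul_nonsing_inv _ hHdet, Matrix.one_mul]
  -- pinv M * M = 1
  have hpM : pinv M * M = 1 := by
    unfold pinv
    rw [Matrix.mul_assoc, Matrix.nonsing_inv_mul _ hMMdet]
  -- now compute
  have hcancel : U * pinv M * S * (U * Uᵀ) = U * Uᵀ := by
    calc U * pinv M * S * (U * Uᵀ)
        = U * (pinv M * (S * U)) * Uᵀ := by simp only [Matrix.mul_assoc]
      _ = U * Uᵀ := by rw [← hM, hpM, Matrix.mul_one]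
  rw [hchat]
  simp only [Matrix.mulVec_mulVec]
  rw [show B * (pinv (S * B) * S) = U * pinv M * S by rw [← Matrix.mul_assoc, hBp]]
  rw [Matrix.mulVec_sub]
  simp only [Matrix.mulVec_mulVec]
  rw [hcancel]
  abel
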